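/- Feasibility of the LMI implies spectral placement: if there exist P_Φ, P_e ≻ 0 symmetric, G, and λ > 0 such that the 3N×3N block matrix [[P_ΦA + AᵀP_Φ + 2αP_Φ + λc_r²I, 0, P_Φ],[0, P_eA − GC + AᵀP_e − CᵀGᵀ + 2αP_e, P_e],[P_Φ, P_e, −λI]] is negative definite, then with L = P_e^{−1}G, all eigenvalues of A − LC have real part less than −α, and additionally all eigenvalues of A have real part less than −α. -/

import Mathlib

open Matrix

/-- `μ : ℂ` is an eigenvalue of the real matrix `M`. -/
def Matrix.HasComplexEigenvalue {N : ℕ} (M : Matrix (Fin N) (Fin N) ℝ) (μ : ℂ) : Prop :=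
  ∃ v : Fin N → ℂ, v ≠ 0 ∧ (M.map (Complex.ofReal)) *ᵥ v = μ • v

section aux

variable {n : ℕ}

/-- Real part of the complex quadratic form of a real matrix. -/
lemma aux_re_quad (Q : Matrix (Fin n) (Fin n) ℝ) (v : Fin n → ℂ) :
    (star v ⬝ᵥ (Q.map Complex.ofReal) *ᵥ v).re
      = (fun i => (v i).re) ⬝ᵥ Q *ᵥ (fun i => (v i).re)
      + (fun i => (v i).im) ⬝ᵥ Q *ᵥ (fun i => (v i).im) := by
  simp only [dotProduct, mulVec, Pi.star_apply, Matrix.map_apply, Finset.mul_sum]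
  rw [← Finset.sum_add_distrib, Complex.re_sum]
  refine Finset.sum_congr rfl fun i _ => ?_
  rw [Complex.re_sum, ← Finset.sum_add_distrib]
  refine Finset.sum_congr rfl fun j _ => ?_
  simp [Complex.mul_re, Complex.mul_im]

lemma aux_posdef_complex {Q : Matrix (Fin n) (Fin n) ℝ} (hQ : Q.PosDef)
    {v : Fin n → ℂ} (hv : v ≠ 0) :
    0 < (star v ⬝ᵥ (Q.map Complex.ofReal) *ᵥ v).re := by
  rw [aux_re_quad]
  set x : Fin n → ℝ := fun i => (v i).re with hx
  set y : Fin n → ℝ := fun i => (v i).im with hy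
  have hxy : x ≠ 0 ∨ y ≠ 0 := by
    by_contra h
    push_neg at h
    apply hv
    funext i
    have h1 := congrFun h.1 i
    have h2 := congrFun h.2 i
    simp only [hx, hy, Pi.zero_apply] at h1 h2
    exact Complex.ext h1 h2
  have hxnn : 0 ≤ x ⬝ᵥ Q *ᵥ x := by simpa using hQ.posSemidef.dotProduct_mulVec_nonneg x
  have hynn : 0 ≤ y ⬝ᵥ Q *ᵥ y := by simpa using hQ.posSemidef.dotProduct_mulVec_nonneg y
  rcases hxy with h | h
  · have := hQ.dotProduct_mulVec_pos h
    simp only [star_trivial] at this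
    have hy' : 0 ≤ y ⬝ᵥ Q *ᵥ y := hynn
    linarith
  · have := hQ.dotProduct_mulVec_pos h
    simp only [star_trivial] at this
    linarith

lemma aux_smul_map (c : ℝ) (P : Matrix (Fin n) (Fin n) ℝ) :
    (c • P).map Complex.ofReal = (c : ℂ) • P.map Complex.ofReal := by
  ext i j
  simp

lemma aux_conjTranspose_map (M : Matrix (Fin n) (Fin n) ℝ) :
    (M.map Complex.ofReal)ᴴ = Mᵀ.map Complex.ofReal := by
  ext i j
  simp [conjTranspose_apply, Complex.conj_ofReal]

/-- Key Lyapunov lemma: if `P ≻ 0` and `-(P M + Mᵀ P + 2α P) ≻ 0`, then every complex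
eigenvalue of `M` has real part `< -α`. -/
lemma aux_lyapunov (P M : Matrix (Fin n) (Fin n) ℝ) (hP : P.PosDef) (α : ℝ)
    (hQ : (-(P * M + Mᵀ * P + (2 * α) • P)).PosDef) :
    ∀ μ : ℂ, M.HasComplexEigenvalue μ → μ.re < -α := by
  intro μ ⟨v, hv, hev⟩
  set Pc := P.map Complex.ofReal with hPc
  set Mc := M.map Complex.ofReal with hMc
  set a : ℂ := star v ⬝ᵥ Pc *ᵥ v with ha
  have hare : 0 < a.re := aux_posdef_complex hP hv
  set Q : Matrix (Fin n) (Fin n) ℝ := P * M + Mᵀ * P + (2 * α) • P with hQdef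
  have hQmap : Q.map Complex.ofReal = Pc * Mc + Mcᵀ * Pc + ((2 * α : ℝ) : ℂ) • Pc := by
    ext i j
    simp only [hQdef, hPc, hMc, Matrix.map_apply, Matrix.add_apply, Matrix.mul_apply,
      Matrix.smul_apply, Matrix.transpose_apply, smul_eq_mul]
    push_cast
    ring
  -- compute star v ⬝ᵥ Qc *ᵥ v
  have hterm1 : star v ⬝ᵥ (Pc * Mc) *ᵥ v = μ * a := by
    rw [← Matrix.mulVec_mulVec, hev, Matrix.mulVec_smul, dotProduct_smul]
    simp [ha, smul_eq_mul]
  have hterm2 : star v ⬝ᵥ (Mcᵀ * Pc) *ᵥ v = (starRingEnd ℂ) μ * a := by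
    have hct : Mcᵀ = Mcᴴ := by
      rw [hMc, aux_conjTranspose_map, Matrix.transpose_map]
    rw [hct, ← Matrix.mulVec_mulVec, Matrix.dotProduct_mulVec, ← Matrix.star_mulVec, hev]
    rw [star_smul, smul_dotProduct]
    simp [ha, smul_eq_mul]
  have hterm3 : star v ⬝ᵥ (((2 * α : ℝ) : ℂ) • Pc) *ᵥ v = ((2 * α : ℝ) : ℂ) * a := by
    rw [Matrix.smul_mulVec, dotProduct_smul]
    simp [ha, smul_eq_mul]
  have hq : star v ⬝ᵥ (Q.map Complex.ofReal) *ᵥ v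
      = μ * a + (starRingEnd ℂ) μ * a + ((2 * α : ℝ) : ℂ) * a := by
    rw [hQmap, Matrix.add_mulVec, Matrix.add_mulVec, dotProduct_add,
      dotProduct_add, hterm1, hterm2, hterm3]
  -- negativity
  have hneg : 0 < (star v ⬝ᵥ ((-Q).map Complex.ofReal) *ᵥ v).re := aux_posdef_complex hQ hv
  have hnegmap : (-Q).map Complex.ofReal = -(Q.map Complex.ofReal) := by
    ext i j; simp
  rw [hnegmap, Matrix.neg_mulVec, dotProduct_neg, Complex.neg_re] at hneg
  have hqre : (star v ⬝ᵥ (Q.map Complex.ofReal) *ᵥ v).re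
      = (2 * μ.re + 2 * α) * a.re := by
    rw [hq]
    simp only [Complex.add_re, Complex.mul_re, Complex.conj_re, Complex.conj_im,
      Complex.ofReal_re, Complex.ofReal_im]
    ring
  rw [hqre] at hneg
  nlinarith

lemma aux_fromBlocks_posDef {p q : Type*} [Fintype p] [Fintype q]
    {A : Matrix p p ℝ} {B : Matrix p q ℝ} {C : Matrix q p ℝ} {D : Matrix q q ℝ}
    (h : (Matrix.fromBlocks A B C D).PosDef) : A.PosDef ∧ D.PosDef := by
  obtain ⟨hherm, hquad⟩ := Matrix.posDef_iff_dotProduct_mulVec.mp h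
  rw [Matrix.isHermitian_fromBlocks_iff] at hherm
  constructor
  · refine Matrix.PosDef.of_dotProduct_mulVec_pos hherm.1 fun x hx => ?_
    have hne : (Sum.elim x (0 : q → ℝ)) ≠ 0 := by
      intro hc
      apply hx
      funext i
      exact congrFun hc (Sum.inl i)
    have := hquad (x := Sum.elim x 0) hne
    simpa [Matrix.fromBlocks_mulVec, sumElim_dotProduct_sumElim] using this
  · refine Matrix.PosDef.of_dotProduct_mulVec_pos hherm.2.2.2 fun x hx => ?_
    have hne : (Sum.elim (0 : p → ℝ) x) ≠ 0 := by
      intro hc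
      apply hx
      funext i
      exact congrFun hc (Sum.inr i)
    have := hquad (x := Sum.elim 0 x) hne
    simpa [Matrix.fromBlocks_mulVec, sumElim_dotProduct_sumElim] using this

lemma aux_neg_fromBlocks {p q r s : Type*}
    (A : Matrix p r ℝ) (B : Matrix p s ℝ) (C : Matrix q r ℝ) (D : Matrix q s ℝ) :
    -(Matrix.fromBlocks A B C D) = Matrix.fromBlocks (-A) (-B) (-C) (-D) := by
  ext i j
  cases i <;> cases j <;> simp [Matrix.fromBlocks]

end aux

theorem stmt_18 {N m : ℕ} (A : Matrix (Fin N) (Fin N) ℝ) (C : Matrix (Fin m) (Fin N) ℝ)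
    (G : Matrix (Fin N) (Fin m) ℝ) (PΦ Pe : Matrix (Fin N) (Fin N) ℝ)
    (hPΦ : PΦ.PosDef) (hPe : Pe.PosDef) (α cr lam : ℝ) (hα : 0 < α) (hcr : 0 < cr)
    (hlam : 0 < lam)
    (hLMI :
      (-(Matrix.fromBlocks
          (Matrix.fromBlocks
            (PΦ * A + Aᵀ * PΦ + (2 * α) • PΦ + (lam * cr ^ 2) • (1 : Matrix (Fin N) (Fin N) ℝ))
            0 0
            (Pe * A - G * C + Aᵀ * Pe - Cᵀ * Gᵀ + (2 * α) • Pe))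
          (Matrix.fromRows PΦ Pe) (Matrix.fromCols PΦ Pe)
          (-lam • (1 : Matrix (Fin N) (Fin N) ℝ)))).PosDef) :
    letI L := Pe⁻¹ * G
    (∀ μ : ℂ, (A - L * C).HasComplexEigenvalue μ → μ.re < -α) ∧
    (∀ μ : ℂ, A.HasComplexEigenvalue μ → μ.re < -α) := by
  -- rewrite the negated big block matrix as a fromBlocks matrix
  rw [aux_neg_fromBlocks, aux_neg_fromBlocks] at hLMI
  obtain ⟨hTop, _⟩ := aux_fromBlocks_posDef hLMI
  obtain ⟨hQ1', hQ2⟩ := aux_fromBlocks_posDef hTop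
  -- strip the (lam * cr ^ 2) • 1 term
  have hQ1 : (-(PΦ * A + Aᵀ * PΦ + (2 * α) • PΦ)).PosDef := by
    have heq : (-(PΦ * A + Aᵀ * PΦ + (2 * α) • PΦ))
        = (-(PΦ * A + Aᵀ * PΦ + (2 * α) • PΦ + (lam * cr ^ 2) • (1 : Matrix (Fin N) (Fin N) ℝ)))
          + (lam * cr ^ 2) • (1 : Matrix (Fin N) (Fin N) ℝ) := by
      abel
    rw [heq]
    refine hQ1'.add_posSemidef ?_
    refine Matrix.PosSemidef.of_dotProduct_mulVec_nonneg ?_ fun x => ?_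
    · show ((lam * cr ^ 2) • (1 : Matrix (Fin N) (Fin N) ℝ))ᴴ = _
      ext i j
      simp [Matrix.conjTranspose_apply, Matrix.one_apply, eq_comm]
    · simp only [Matrix.smul_mulVec, Matrix.one_mulVec, dotProduct_smul,
        star_trivial, smul_eq_mul]
      have hxx : 0 ≤ x ⬝ᵥ x := by
        unfold dotProduct
        exact Finset.sum_nonneg fun i _ => mul_self_nonneg _
      positivity
  -- invertibility facts for Pe
  have hdet : IsUnit Pe.det := isUnit_iff_ne_zero.mpr (ne_of_gt hPe.det_pos)
  have hPeInv : Pe * Pe⁻¹ = 1 := Matrix.mul_nonsing_inv Pe hdet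
  have hInvPe : Pe⁻¹ * Pe = 1 := Matrix.nonsing_inv_mul Pe hdet
  have hPeT : Peᵀ = Pe := hPe.isHermitian
  -- rewrite Q2 as a Lyapunov expression for A - L C
  have hQ2' : (-(Pe * (A - (Pe⁻¹ * G) * C) + (A - (Pe⁻¹ * G) * C)ᵀ * Pe + (2 * α) • Pe)).PosDef := by
    have heq : Pe * (A - (Pe⁻¹ * G) * C) + (A - (Pe⁻¹ * G) * C)ᵀ * Pe + (2 * α) • Pe
        = Pe * A - G * C + Aᵀ * Pe - Cᵀ * Gᵀ + (2 * α) • Pe := by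
      have h1 : Pe * (A - (Pe⁻¹ * G) * C) = Pe * A - G * C := by
        rw [Matrix.mul_sub]
        congr 1
        rw [← Matrix.mul_assoc, ← Matrix.mul_assoc, hPeInv, Matrix.one_mul]
      have h2 : (A - (Pe⁻¹ * G) * C)ᵀ * Pe = Aᵀ * Pe - Cᵀ * Gᵀ := by
        rw [Matrix.transpose_sub, Matrix.sub_mul]
        congr 1
        rw [Matrix.transpose_mul, Matrix.transpose_mul, Matrix.transpose_nonsing_inv, hPeT]
        rw [Matrix.mul_assoc, Matrix.mul_assoc, hInvPe, Matrix.mul_one]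
      rw [h1, h2]
      abel
    rw [heq]
    exact hQ2
  exact ⟨aux_lyapunov Pe (A - (Pe⁻¹ * G) * C) hPe α hQ2',
    aux_lyapunov PΦ A hPΦ α hQ1⟩
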